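/- arXiv:2007.06266 — 3 statements merged into one kernel-verified Lean document; each statement's English description precedes it below -/
import Mathlib

section
/- Let E be a real Hilbert space and U ⊆ E a nonempty closed convex set. Let c₀ > 0, L ≥ 0, e₁, e₂ ≥ 0, and ρ > 0 satisfy ρ L² ≤ c₀ and c₀ ρ ≤ 1. Suppose a, b ∈ U and v, w, v̂, ŵ ∈ E satisfy: a = P_U(a − ρ v) and b = P_U(b − ρ w) (P_U the metric projection onto U); the monotonicity condition ⟨v̂ − ŵ, a − b⟩ ≥ c₀ ‖a − b‖²; the Lipschitz-type bound ‖v̂ − ŵ‖ ≤ L ‖a − b‖; and the perturbation bounds ‖v − v̂‖ ≤ e₁ and ‖w − ŵ‖ ≤ e₂. Then ‖a − b‖ ≤ (2/c₀)(e₁ + e₂). -/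
/-- Variational inequality from the minimal-distance characterization. -/
lemma proj_vi {E : Type*} [NormedAddCommGroup E] [InnerProductSpace ℝ E]
    (U : Set E) (hUconv : Convex ℝ U) (a : E) (ha : a ∈ U) (p : E)
    (hProj : ∀ z ∈ U, dist p a ≤ dist p z) :
    ∀ z ∈ U, (inner ℝ (p - a) (z - a) : ℝ) ≤ 0 := by
  have heq : ‖p - a‖ = ⨅ w : U, ‖p - w‖ := by
    haveI : Nonempty U := ⟨⟨a, ha⟩⟩
    apply le_antisymm
    · exact le_ciInf fun w => by
        simpa [dist_eq_norm] using hProj w w.2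
    · exact ciInf_le ⟨0, fun x ⟨w, hw⟩ => hw ▸ norm_nonneg _⟩ (⟨a, ha⟩ : U)
  exact (norm_eq_iInf_iff_real_inner_le_zero hUconv ha).mp heq

/-- Abstract stability estimate at the core of Lemma 4.6 of the paper
(inequalities (37)–(43)). -/
theorem projected_gradient_stability
    {E : Type*} [NormedAddCommGroup E] [InnerProductSpace ℝ E] [CompleteSpace E]
    (U : Set E) (hUne : U.Nonempty) (hUcl : IsClosed U) (hUconv : Convex ℝ U)
    (c₀ L e₁ e₂ ρ : ℝ) (hc₀ : 0 < c₀) (hL : 0 ≤ L) (he₁ : 0 ≤ e₁) (he₂ : 0 ≤ e₂)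
    (hρ : 0 < ρ) (hρL : ρ * L ^ 2 ≤ c₀) (hc₀ρ : c₀ * ρ ≤ 1)
    (a b : E) (ha : a ∈ U) (hb : b ∈ U)
    (v w vh wh : E)
    (haProj : ∀ z ∈ U, dist (a - ρ • v) a ≤ dist (a - ρ • v) z)
    (hbProj : ∀ z ∈ U, dist (b - ρ • w) b ≤ dist (b - ρ • w) z)
    (hmono : c₀ * ‖a - b‖ ^ 2 ≤ (inner ℝ (vh - wh) (a - b) : ℝ))
    (hLip : ‖vh - wh‖ ≤ L * ‖a - b‖)
    (hv : ‖v - vh‖ ≤ e₁) (hw : ‖w - wh‖ ≤ e₂) :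
    ‖a - b‖ ≤ (2 / c₀) * (e₁ + e₂) := by
  have hva := proj_vi U hUconv a ha _ haProj b hb
  have hwb := proj_vi U hUconv b hb _ hbProj a ha
  -- hva : ⟪(a - ρ•v) - a, b - a⟫ ≤ 0, i.e. -ρ ⟪v, b - a⟫ ≤ 0
  have h1 : (0:ℝ) ≤ inner ℝ v (b - a) := by
    have : (a - ρ • v) - a = (-ρ) • v := by
      simp [sub_smul, neg_smul]
    rw [this, real_inner_smul_left] at hva
    nlinarith
  have h2 : (0:ℝ) ≤ inner ℝ w (a - b) := by
    have : (b - ρ • w) - b = (-ρ) • w := by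
      simp [sub_smul, neg_smul]
    rw [this, real_inner_smul_left] at hwb
    nlinarith
  -- ⟪v - w, a - b⟫ ≤ 0
  have h3 : (inner ℝ (v - w) (a - b) : ℝ) ≤ 0 := by
    have : (inner ℝ v (b - a) : ℝ) = - inner ℝ v (a - b) := by
      rw [← inner_neg_right]; congr 1; abel
    rw [this] at h1
    rw [inner_sub_left]
    linarith
  have hcs1 : (inner ℝ (vh - v) (a - b) : ℝ) ≤ e₁ * ‖a - b‖ := by
    calc (inner ℝ (vh - v) (a - b) : ℝ) ≤ ‖vh - v‖ * ‖a - b‖ :=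
          real_inner_le_norm _ _
      _ ≤ e₁ * ‖a - b‖ := by
          apply mul_le_mul_of_nonneg_right _ (norm_nonneg _)
          rw [norm_sub_rev]; exact hv
  have hcs2 : (inner ℝ (w - wh) (a - b) : ℝ) ≤ e₂ * ‖a - b‖ := by
    calc (inner ℝ (w - wh) (a - b) : ℝ) ≤ ‖w - wh‖ * ‖a - b‖ :=
          real_inner_le_norm _ _
      _ ≤ e₂ * ‖a - b‖ := mul_le_mul_of_nonneg_right hw (norm_nonneg _)
  have hsplit : (inner ℝ (vh - wh) (a - b) : ℝ)
      = inner ℝ (vh - v) (a - b) + inner ℝ (v - w) (a - b) + inner ℝ (w - wh) (a - b) := by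
    rw [← inner_add_left, ← inner_add_left]; congr 1; abel
  have hkey : c₀ * ‖a - b‖ ^ 2 ≤ (e₁ + e₂) * ‖a - b‖ := by
    rw [hsplit] at hmono; nlinarith
  rcases eq_or_lt_of_le (norm_nonneg (a - b)) with h0 | h0
  · rw [← h0]; positivity
  · rw [div_mul_eq_mul_div, le_div_iff₀ hc₀]
    nlinarith
end

section
/- Let U ⊆ ℝ^m be an open convex set, μ a finite Borel measure on ℝⁿ, and F : ℝⁿ → ℝ^m a μ-integrable function. Let φ̄ : ℝⁿ → ℝ^m be a bounded continuously differentiable function with bounded derivative such that φ̄(x) ∈ U for all x. Suppose that ∫ ⟨F(x), φ(x) − φ̄(x)⟩ dμ(x) ≥ 0 for every bounded continuously differentiable function φ : ℝⁿ → ℝ^m with bounded derivative satisfying φ(x) ∈ U for all x. Then F(x) = 0 for μ-almost every x. -/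
set_option maxHeartbeats 1000000

open MeasureTheory Set Manifold

/-- If an integrable function `G` satisfies `∫ h G ≥ 0` for every smooth compactly supported
test function `h` with values in `[0,1]`, then `G ≥ 0` a.e. -/
lemma ae_nonneg_of_forall_smooth_cutoff {n : ℕ}
    (μ : Measure (EuclideanSpace ℝ (Fin n))) [IsFiniteMeasure μ]
    (G : EuclideanSpace ℝ (Fin n) → ℝ) (hG : Integrable G μ)
    (hint : ∀ h : EuclideanSpace ℝ (Fin n) → ℝ, ContDiff ℝ 1 h → HasCompactSupport h →
      (∀ x, h x ∈ Set.Icc (0:ℝ) 1) → 0 ≤ ∫ x, h x * G x ∂μ) :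
    0 ≤ᵐ[μ] G := by
  refine ae_nonneg_of_forall_setIntegral_nonneg hG (fun s hs hμs => ?_)
  suffices key : ∀ ε : ℝ, 0 < ε → -(2*ε) ≤ ∫ x in s, G x ∂μ by
    by_contra hneg
    push_neg at hneg
    have := key (-(∫ x in s, G x ∂μ) / 3) (by linarith)
    linarith
  intro ε hε
  obtain ⟨δ, hδ0, hδ⟩ := exists_pos_setLIntegral_lt_of_measure_lt
    (μ := μ) (f := fun x => (‖G x‖₊ : ENNReal)) hG.2.ne
    (ε := ENNReal.ofReal ε) ((ENNReal.ofReal_pos.2 hε).ne')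
  -- small sets have small integrals
  have key2 : ∀ (t : Set (EuclideanSpace ℝ (Fin n))) (g : EuclideanSpace ℝ (Fin n) → ℝ),
      μ t < δ → (∀ x, ‖g x‖ ≤ ‖G x‖) → |∫ x in t, g x ∂μ| ≤ ε := by
    intro t g ht hgb
    have h1 : ‖∫ x in t, g x ∂μ‖ ≤ (∫⁻ x in t, ENNReal.ofReal ‖g x‖ ∂μ).toReal :=
      norm_integral_le_lintegral_norm _
    have h2 : (∫⁻ x in t, ENNReal.ofReal ‖g x‖ ∂μ) ≤ ∫⁻ x in t, (‖G x‖₊ : ENNReal) ∂μ := by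
      refine lintegral_mono fun x => ?_
      rw [← ENNReal.ofReal_coe_nnreal, coe_nnnorm]
      exact ENNReal.ofReal_le_ofReal (hgb x)
    have h3 := (h2.trans_lt (hδ t ht)).le
    have h4 := ENNReal.toReal_mono ENNReal.ofReal_ne_top h3
    rw [ENNReal.toReal_ofReal hε.le] at h4
    calc |∫ x in t, g x ∂μ| = ‖∫ x in t, g x ∂μ‖ := (Real.norm_eq_abs _).symm
      _ ≤ _ := h1
      _ ≤ ε := h4
  -- compact set inside `s`
  obtain ⟨K, hKs, hKc, hKμ⟩ := hs.exists_isCompact_diff_lt hμs.ne hδ0.ne'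
  -- bounded open set around `K`
  obtain ⟨O, hKO, hOopen, hOμ⟩ := K.exists_isOpen_lt_add (μ := μ) hKc.measure_lt_top.ne hδ0.ne'
  obtain ⟨R, hKR⟩ := hKc.isBounded.subset_ball (0 : EuclideanSpace ℝ (Fin n))
  set O' : Set (EuclideanSpace ℝ (Fin n)) := O ∩ Metric.ball 0 R with hO'def
  have hO'open : IsOpen O' := hOopen.inter Metric.isOpen_ball
  have hKO' : K ⊆ O' := subset_inter hKO hKR
  have hO'K : μ (O' \ K) < δ := by
    refine lt_of_le_of_lt (measure_mono (diff_subset_diff_left inter_subset_left)) ?_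
    exact measure_diff_lt_of_lt_add hKc.nullMeasurableSet hKO hKc.measure_lt_top.ne hOμ
  -- a smooth cutoff
  obtain ⟨f, hf0, hf1, hf01⟩ := exists_contMDiffMap_zero_one_of_isClosed (n := ⊤)
    (𝓘(ℝ, EuclideanSpace ℝ (Fin n))) hO'open.isClosed_compl hKc.isClosed
    (disjoint_left.mpr fun x hx hx' => hx (hKO' hx'))
  set h : EuclideanSpace ℝ (Fin n) → ℝ := ⇑f with hh
  have hsmooth : ContDiff ℝ 1 h := (contMDiff_iff_contDiff.mp f.contMDiff).of_le (by exact_mod_cast le_top)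
  have hsupp : HasCompactSupport h := by
    have hsub : Function.support h ⊆ O' := by
      intro x hx
      by_contra hxO
      exact hx (hf0 hxO)
    have : IsCompact (closure O') :=
      (Metric.isBounded_ball.subset inter_subset_right).isCompact_closure
    exact this.of_isClosed_subset isClosed_closure (closure_mono hsub)
  have h0le : 0 ≤ ∫ x, h x * G x ∂μ := hint h hsmooth hsupp hf01
  -- integrability facts
  have hhGint : Integrable (fun x => h x * G x) μ := by
    refine hG.bdd_mul (c := 1) hsmooth.continuous.aestronglyMeasurable (ae_of_all _ fun x => ?_)
    rw [Real.norm_eq_abs, abs_le]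
    constructor
    · linarith [(hf01 x).1]
    · exact (hf01 x).2
  -- decompose integral of h*G
  have e1 : ∫ x, h x * G x ∂μ = ∫ x in O', h x * G x ∂μ := by
    refine (setIntegral_eq_integral_of_forall_compl_eq_zero fun x hx => ?_).symm
    simp [hf0 hx]
  have hmeasO'K : MeasurableSet (O' \ K) := hO'open.measurableSet.diff hKc.measurableSet
  have e2 : ∫ x in O', h x * G x ∂μ
      = ∫ x in K, h x * G x ∂μ + ∫ x in O' \ K, h x * G x ∂μ := by
    rw [← setIntegral_union (disjoint_sdiff_right) hmeasO'K
      (hhGint.integrableOn) (hhGint.integrableOn), union_diff_cancel hKO']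
  have e3 : ∫ x in K, h x * G x ∂μ = ∫ x in K, G x ∂μ := by
    refine setIntegral_congr_fun hKc.measurableSet fun x hx => ?_
    simp [hf1 hx]
  have e4 : ∫ x in s, G x ∂μ = ∫ x in K, G x ∂μ + ∫ x in s \ K, G x ∂μ := by
    rw [← setIntegral_union (disjoint_sdiff_right) (hs.diff hKc.measurableSet)
      (hG.integrableOn) (hG.integrableOn), union_diff_cancel hKs]
  have b1 : |∫ x in O' \ K, h x * G x ∂μ| ≤ ε := by
    refine key2 _ _ hO'K fun x => ?_
    rw [Real.norm_eq_abs, abs_mul, Real.norm_eq_abs]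
    have h1 : |h x| ≤ 1 := abs_le.2 ⟨by linarith [(hf01 x).1], (hf01 x).2⟩
    nlinarith [abs_nonneg (G x)]
  have b2 : |∫ x in s \ K, G x ∂μ| ≤ ε := key2 _ _ hKμ fun x => le_rfl
  rw [e1, e2, e3] at h0le
  rw [e4]
  have hb1 := abs_le.1 b1
  have hb2 := abs_le.1 b2
  linarith

/-- Localization lemma underlying the passage in Theorem 3.1 of the paper from the
integrated variational inequality over all bounded `C¹` feedback functions valued in
an open convex control set `U` to the pointwise first-order condition: if
`∫ ⟨F, φ − φ̄⟩ dμ ≥ 0` for every admissible `φ`, then `F = 0` μ-a.e. -/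
theorem localization_of_variational_inequality
    {n m : ℕ} (U : Set (EuclideanSpace ℝ (Fin m))) (hUopen : IsOpen U)
    (hUconv : Convex ℝ U)
    (μ : Measure (EuclideanSpace ℝ (Fin n))) [IsFiniteMeasure μ]
    (F : EuclideanSpace ℝ (Fin n) → EuclideanSpace ℝ (Fin m)) (hF : Integrable F μ)
    (φbar : EuclideanSpace ℝ (Fin n) → EuclideanSpace ℝ (Fin m))
    (hφbar : ContDiff ℝ 1 φbar)
    (hφbarBdd : ∃ M : ℝ, ∀ x, ‖φbar x‖ ≤ M ∧ ‖fderiv ℝ φbar x‖ ≤ M)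
    (hφbarU : ∀ x, φbar x ∈ U)
    (hineq : ∀ φ : EuclideanSpace ℝ (Fin n) → EuclideanSpace ℝ (Fin m),
      ContDiff ℝ 1 φ → (∃ M : ℝ, ∀ x, ‖φ x‖ ≤ M ∧ ‖fderiv ℝ φ x‖ ≤ M) →
      (∀ x, φ x ∈ U) →
      0 ≤ ∫ x, (inner ℝ (F x) (φ x - φbar x) : ℝ) ∂μ) :
    ∀ᵐ x ∂μ, F x = 0 := by
  obtain ⟨M, hM⟩ := hφbarBdd
  have hM0 : 0 ≤ M := le_trans (norm_nonneg _) (hM 0).1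
  have hφbarDiff : Differentiable ℝ φbar := hφbar.differentiable one_ne_zero
  -- Step 1: pointwise variational inequality for each fixed `c ∈ U`.
  have step : ∀ c ∈ U, ∀ᵐ x ∂μ, 0 ≤ (inner ℝ (F x) (c - φbar x) : ℝ) := by
    intro c hc
    have hGmeas : AEStronglyMeasurable (fun x => (inner ℝ (F x) (c - φbar x) : ℝ)) μ :=
      hF.aestronglyMeasurable.inner
        (continuous_const.sub hφbar.continuous).aestronglyMeasurable
    have hGint : Integrable (fun x => (inner ℝ (F x) (c - φbar x) : ℝ)) μ := by
      refine Integrable.mono' (hF.norm.const_mul (‖c‖ + M)) hGmeas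
        (ae_of_all _ fun x => ?_)
      have h1 : ‖(inner ℝ (F x) (c - φbar x) : ℝ)‖ ≤ ‖F x‖ * ‖c - φbar x‖ :=
        norm_inner_le_norm _ _
      have h2 : ‖c - φbar x‖ ≤ ‖c‖ + M :=
        le_trans (norm_sub_le _ _) (by linarith [(hM x).1])
      calc ‖(inner ℝ (F x) (c - φbar x) : ℝ)‖ ≤ ‖F x‖ * ‖c - φbar x‖ := h1
        _ ≤ ‖F x‖ * (‖c‖ + M) := by
            exact mul_le_mul_of_nonneg_left h2 (norm_nonneg _)
        _ = (‖c‖ + M) * ‖F x‖ := mul_comm _ _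
    refine ae_nonneg_of_forall_smooth_cutoff μ _ hGint ?_
    intro h hh hhc hh01
    -- bound for the derivative of `h`
    obtain ⟨C, hC⟩ := (hh.continuous_fderiv one_ne_zero).bounded_above_of_compact_support
      (hhc.fderiv ℝ)
    have hC0 : 0 ≤ C := le_trans (norm_nonneg _) (hC 0)
    set φ : EuclideanSpace ℝ (Fin n) → EuclideanSpace ℝ (Fin m) :=
      fun x => φbar x + h x • (c - φbar x) with hφdef
    have hhDiff : Differentiable ℝ h := hh.differentiable one_ne_zero
    have hvDiff : Differentiable ℝ (fun y => c - φbar y) :=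
      (differentiable_const c).sub hφbarDiff
    have hφsmooth : ContDiff ℝ 1 φ :=
      hφbar.add (hh.smul (contDiff_const.sub hφbar))
    have hφBdd : ∃ M' : ℝ, ∀ x, ‖φ x‖ ≤ M' ∧ ‖fderiv ℝ φ x‖ ≤ M' := by
      refine ⟨2*M + ‖c‖ + C * (‖c‖ + M) + 1, fun x => ?_⟩
      have hb : ‖c - φbar x‖ ≤ ‖c‖ + M :=
        le_trans (norm_sub_le _ _) (by linarith [(hM x).1])
      have hhx : |h x| ≤ 1 := abs_le.2 ⟨by linarith [(hh01 x).1], (hh01 x).2⟩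
      constructor
      · calc ‖φ x‖ ≤ ‖φbar x‖ + ‖h x • (c - φbar x)‖ := norm_add_le _ _
          _ = ‖φbar x‖ + |h x| * ‖c - φbar x‖ := by rw [norm_smul, Real.norm_eq_abs]
          _ ≤ M + 1 * (‖c‖ + M) := by
              refine add_le_add (hM x).1 ?_
              exact mul_le_mul hhx hb (norm_nonneg _) zero_le_one
          _ ≤ 2*M + ‖c‖ + C * (‖c‖ + M) + 1 := by nlinarith [norm_nonneg c]
      · have heq : fderiv ℝ φ x = fderiv ℝ φbar x +
            (h x • fderiv ℝ (fun y => c - φbar y) x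
              + (fderiv ℝ h x).smulRight (c - φbar x)) := by
          rw [hφdef]
          rw [fderiv_fun_add (g := fun y => h y • (c - φbar y)) (hφbarDiff x) ((hhDiff x).smul (hvDiff x))]
          rw [fderiv_fun_smul (hhDiff x) (hvDiff x)]
        rw [heq]
        have h1 : ‖h x • fderiv ℝ (fun y => c - φbar y) x‖ ≤ 1 * M := by
          have hnf : ‖fderiv ℝ (fun y => c - φbar y) x‖ ≤ M := by
            rw [fderiv_const_sub, norm_neg]
            exact (hM x).2
          refine le_trans (ContinuousLinearMap.opNorm_smul_le _ _) ?_
          rw [Real.norm_eq_abs]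
          exact mul_le_mul hhx hnf (norm_nonneg _) zero_le_one
        have h2 : ‖(fderiv ℝ h x).smulRight (c - φbar x)‖ ≤ C * (‖c‖ + M) := by
          rw [ContinuousLinearMap.norm_smulRight_apply]
          exact mul_le_mul (hC x) hb (norm_nonneg _) hC0
        calc ‖fderiv ℝ φbar x + (h x • fderiv ℝ (fun y => c - φbar y) x
              + (fderiv ℝ h x).smulRight (c - φbar x))‖
            ≤ ‖fderiv ℝ φbar x‖ + (‖h x • fderiv ℝ (fun y => c - φbar y) x‖
              + ‖(fderiv ℝ h x).smulRight (c - φbar x)‖) :=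
              le_trans (norm_add_le _ _) (add_le_add le_rfl (norm_add_le _ _))
          _ ≤ M + (1 * M + C * (‖c‖ + M)) := by
              refine add_le_add (hM x).2 (add_le_add h1 h2)
          _ ≤ 2*M + ‖c‖ + C * (‖c‖ + M) + 1 := by nlinarith [norm_nonneg c]
    have hφU : ∀ x, φ x ∈ U := by
      intro x
      have hrepr : φ x = (1 - h x) • φbar x + h x • c := by
        simp only [hφdef, smul_sub, sub_smul, one_smul]
        abel
      rw [hrepr]
      exact hUconv (hφbarU x) hc (by linarith [(hh01 x).2]) (hh01 x).1 (by ring)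
    have h0 := hineq φ hφsmooth hφBdd hφU
    have hpt : ∀ x, (inner ℝ (F x) (φ x - φbar x) : ℝ)
        = h x * (inner ℝ (F x) (c - φbar x) : ℝ) := by
      intro x
      rw [hφdef]
      simp only [add_sub_cancel_left, real_inner_smul_right]
    calc (0:ℝ) ≤ ∫ x, (inner ℝ (F x) (φ x - φbar x) : ℝ) ∂μ := h0
      _ = ∫ x, h x * (inner ℝ (F x) (c - φbar x) : ℝ) ∂μ := by
          exact integral_congr_ae (ae_of_all _ hpt)
  -- Step 2: a countable dense subset of `U`.
  obtain ⟨D₀, hD₀count, hD₀dense⟩ := TopologicalSpace.exists_countable_dense (↥U)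
  set D : Set (EuclideanSpace ℝ (Fin m)) := Subtype.val '' D₀ with hDdef
  have hDcount : D.Countable := hD₀count.image _
  have hDU : D ⊆ U := by
    rintro _ ⟨⟨u, hu⟩, -, rfl⟩
    exact hu
  have hDdense : U ⊆ closure D := by
    intro u hu
    have h1 : (⟨u, hu⟩ : ↥U) ∈ closure D₀ := hD₀dense _
    exact map_mem_closure continuous_subtype_val h1 fun y hy => Set.mem_image_of_mem _ hy
  -- Step 3: combine
  have hae : ∀ᵐ x ∂μ, ∀ c ∈ D, 0 ≤ (inner ℝ (F x) (c - φbar x) : ℝ) :=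
    (ae_ball_iff hDcount).2 fun c hc => step c (hDU hc)
  filter_upwards [hae] with x hx
  have hcl : ∀ c ∈ U, 0 ≤ (inner ℝ (F x) (c - φbar x) : ℝ) := by
    intro c hc
    have hScl : IsClosed {c' : EuclideanSpace ℝ (Fin m) |
        0 ≤ (inner ℝ (F x) (c' - φbar x) : ℝ)} :=
      isClosed_le continuous_const
        (Continuous.inner continuous_const (continuous_id.sub continuous_const))
    have hsub : closure D ⊆ {c' : EuclideanSpace ℝ (Fin m) |
        0 ≤ (inner ℝ (F x) (c' - φbar x) : ℝ)} :=
      hScl.closure_subset_iff.2 fun c' hc' => hx c' hc'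
    exact hsub (hDdense hc)
  obtain ⟨ε, hε, hball⟩ := Metric.isOpen_iff.1 hUopen _ (hφbarU x)
  set δ : ℝ := ε / (2 * (‖F x‖ + 1)) with hδdef
  have hδpos : 0 < δ := by
    apply div_pos hε
    positivity
  have hcU : φbar x - δ • F x ∈ U := by
    apply hball
    rw [Metric.mem_ball, dist_eq_norm]
    have : φbar x - δ • F x - φbar x = -(δ • F x) := by abel
    rw [this, norm_neg, norm_smul, Real.norm_eq_abs, abs_of_pos hδpos]
    rw [hδdef, div_mul_eq_mul_div, div_lt_iff₀ (by positivity)]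
    nlinarith [norm_nonneg (F x)]
  have hfin := hcl _ hcU
  have heq : (inner ℝ (F x) (φbar x - δ • F x - φbar x) : ℝ)
      = -(δ * (inner ℝ (F x) (F x) : ℝ)) := by
    have h1 : φbar x - δ • F x - φbar x = -(δ • F x) := by abel
    rw [h1, inner_neg_right, real_inner_smul_right]
  rw [heq] at hfin
  have hinner : (inner ℝ (F x) (F x) : ℝ) ≤ 0 := by nlinarith
  exact real_inner_self_nonpos.1 hinner
end

section
/- Let T > 0, N a positive integer, t_i = iT/N for 0 ≤ i ≤ N, and K, L > 0. Let b : [0,T] × ℝⁿ × ℝ^m → ℝⁿ be continuous with |b(t,x,u) − b(t,y,u)| ≤ K|x − y| and |b(t,0,u)| ≤ K(1 + |u|) for all t, x, y, u, and let φ₀, …, φ_{N−1} : ℝⁿ → ℝ^m satisfy |φ_i(x) − φ_i(y)| ≤ K|x − y| and |φ_i(0)| ≤ L for all i and x, y. Let X : [0,T] → ℝⁿ be continuous with X(0) = x₀ and, on each interval [t_i, t_{i+1}], X′(t) = b(t, X(t), φ_i(X(t_i))). Then there exists a constant C, depending only on K, L and T (and not on N), such that sup_{0 ≤ t ≤ T}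 |X(t)| ≤ C(1 + |x₀|). -/
set_option maxHeartbeats 2000000


/-- Noiseless (σ ≡ 0) case of Lemma 4.1 of the paper: the state trajectory driven by
the piecewise feedback control `u_t = φ_i(X(t_i))` on `[t_i, t_{i+1}]`, with `b`
Lipschitz in the state, of linear growth in the control, and feedback maps `φ_i`
uniformly `K`-Lipschitz with `|φ_i(0)| ≤ L`, satisfies the growth bound
`sup_{0 ≤ t ≤ T} |X(t)| ≤ C(1 + |x₀|)` with a constant `C` depending only on
`K`, `L` and `T`, not on the number of time steps `N`. -/
theorem piecewise_feedback_state_bound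
    (n m : ℕ) (T K L : ℝ) (hT : 0 < T) (hK : 0 < K) (hL : 0 < L) :
    ∃ C : ℝ, ∀ (N : ℕ), 0 < N →
      ∀ b : ℝ → EuclideanSpace ℝ (Fin n) → EuclideanSpace ℝ (Fin m) →
            EuclideanSpace ℝ (Fin n),
      Continuous (fun p : ℝ × EuclideanSpace ℝ (Fin n) × EuclideanSpace ℝ (Fin m) =>
        b p.1 p.2.1 p.2.2) →
      (∀ t x y u, ‖b t x u - b t y u‖ ≤ K * ‖x - y‖) →
      (∀ t u, ‖b t 0 u‖ ≤ K * (1 + ‖u‖)) →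
      ∀ φ : ℕ → EuclideanSpace ℝ (Fin n) → EuclideanSpace ℝ (Fin m),
      (∀ i < N, ∀ x y, ‖φ i x - φ i y‖ ≤ K * ‖x - y‖) →
      (∀ i < N, ‖φ i 0‖ ≤ L) →
      ∀ (x₀ : EuclideanSpace ℝ (Fin n)) (X : ℝ → EuclideanSpace ℝ (Fin n)),
      ContinuousOn X (Set.Icc 0 T) →
      X 0 = x₀ →
      (∀ i < N, ∀ t ∈ Set.Icc ((i : ℝ) * (T / N)) (((i : ℝ) + 1) * (T / N)),
        HasDerivWithinAt X (b t (X t) (φ i (X ((i : ℝ) * (T / N)))))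
          (Set.Icc ((i : ℝ) * (T / N)) (((i : ℝ) + 1) * (T / N))) t) →
      ∀ t ∈ Set.Icc (0:ℝ) T, ‖X t‖ ≤ C * (1 + ‖x₀‖) := by
  classical
  refine ⟨Real.exp ((K + K*K) * T) * (1 + Real.exp ((K + K*K) * T) * (1 + L)), ?_⟩
  intro N hN b hbcont hbLip hb0 φ hφLip hφ0 x₀ X hXc hX0 hX' t ht
  set P0 := Real.exp ((K + K*K) * T) with hP0def
  set c := P0 * (1 + L) with hcdef
  set h := T / (N:ℝ) with hhdef
  have hN1 : (1:ℝ) ≤ (N:ℝ) := by exact_mod_cast hN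
  have hNpos : (0:ℝ) < (N:ℝ) := by linarith
  have hh0 : 0 < h := div_pos hT hNpos
  have hNh : (N:ℝ) * h = T := by
    rw [hhdef]; field_simp
  have hhT : h ≤ T := by nlinarith
  set ρ := Real.exp ((K + K*K) * h) with hρdef
  have hρ1 : 1 ≤ ρ := Real.one_le_exp (by positivity)
  have hP01 : 1 ≤ P0 := Real.one_le_exp (by positivity)
  have hρP : ρ ≤ P0 := Real.exp_le_exp.2 (by nlinarith)
  have hc0 : 0 < c := by positivity
  have hρN : ρ ^ N = P0 := by
    rw [hρdef, ← Real.exp_nat_mul, hP0def]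
    congr 1
    have : (N:ℝ) * ((K + K*K) * h) = (K + K*K) * ((N:ℝ) * h) := by ring
    rw [this, hNh]
  -- key per-interval estimate
  have h6 : ρ * (K * h * (1 + L)) ≤ c * (ρ - 1) := by
    have e1 : (K + K*K) * h + 1 ≤ ρ := by
      have := Real.add_one_le_exp ((K + K*K) * h)
      linarith
    have e2 : ρ * (K * h * (1 + L)) ≤ P0 * (K * h * (1 + L)) :=
      mul_le_mul_of_nonneg_right hρP (by positivity)
    have e3 : P0 * (K * h * (1 + L)) = c * (K * h) := by rw [hcdef]; ring
    have e4 : c * (K * h) ≤ c * (ρ - 1) := by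
      apply mul_le_mul_of_nonneg_left _ hc0.le
      have : (0:ℝ) ≤ K * K * h := by positivity
      linarith
    linarith
  have step : ∀ i : ℕ, i < N → ∀ s ∈ Set.Icc ((i:ℝ)*h) (((i:ℝ)+1)*h),
      ‖X s‖ ≤ ρ * ‖X ((i:ℝ)*h)‖ + ρ * (K * h * (1 + L)) := by
    intro i hi s hs
    have hi1 : ((i:ℝ)+1) ≤ (N:ℝ) := by exact_mod_cast hi
    have hi0 : (0:ℝ) ≤ (i:ℝ) := Nat.cast_nonneg i
    have ha0 : (0:ℝ) ≤ (i:ℝ)*h := by positivity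
    have hbT : ((i:ℝ)+1)*h ≤ T := by
      have h1 := mul_le_mul_of_nonneg_right hi1 hh0.le
      rw [hNh] at h1
      exact h1
    have hsub : Set.Icc ((i:ℝ)*h) (((i:ℝ)+1)*h) ⊆ Set.Icc (0:ℝ) T :=
      Set.Icc_subset_Icc ha0 hbT
    set a := (i:ℝ)*h with hadef
    set a' := ((i:ℝ)+1)*h with ha'def
    set u := φ i (X a) with hudef
    have hXa0 : (0:ℝ) ≤ ‖X a‖ := norm_nonneg _
    have hu : ‖u‖ ≤ L + K * ‖X a‖ := by
      have h1 := hφLip i hi (X a) 0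
      have h2 := hφ0 i hi
      calc ‖u‖ = ‖(φ i (X a) - φ i 0) + φ i 0‖ := by rw [sub_add_cancel]
        _ ≤ ‖φ i (X a) - φ i 0‖ + ‖φ i 0‖ := norm_add_le _ _
        _ ≤ K * ‖X a - 0‖ + L := add_le_add h1 h2
        _ = L + K * ‖X a‖ := by rw [sub_zero]; ring
    have hder : ∀ x ∈ Set.Ico a a', HasDerivWithinAt X (b x (X x) u) (Set.Ici x) x := by
      intro x hx
      have hmem : Set.Icc a a' ∈ nhdsWithin x (Set.Ici x) := by
        have h1 : Set.Iic a' ∈ nhds x := Iic_mem_nhds hx.2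
        have h2 : Set.Ici x ∩ Set.Iic a' ∈ nhdsWithin x (Set.Ici x) :=
          Filter.inter_mem self_mem_nhdsWithin (mem_nhdsWithin_of_mem_nhds h1)
        refine Filter.mem_of_superset h2 ?_
        rintro y ⟨hy1, hy2⟩
        exact ⟨le_trans hx.1 hy1, hy2⟩
      exact (hX' i hi x ⟨hx.1, le_of_lt hx.2⟩).mono_of_mem_nhdsWithin hmem
    have hbd : ∀ x ∈ Set.Ico a a',
        ‖b x (X x) u‖ ≤ K * ‖X x‖ + K * (1 + L + K * ‖X a‖) := by
      intro x _
      have h1 := hbLip x (X x) 0 u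
      have h2 := hb0 x u
      calc ‖b x (X x) u‖ = ‖(b x (X x) u - b x 0 u) + b x 0 u‖ := by rw [sub_add_cancel]
        _ ≤ ‖b x (X x) u - b x 0 u‖ + ‖b x 0 u‖ := norm_add_le _ _
        _ ≤ K * ‖X x - 0‖ + K * (1 + ‖u‖) := add_le_add h1 h2
        _ ≤ K * ‖X x‖ + K * (1 + L + K * ‖X a‖) := by
            rw [sub_zero]
            have : K * (1 + ‖u‖) ≤ K * (1 + (L + K * ‖X a‖)) := by
              apply mul_le_mul_of_nonneg_left _ hK.le
              linarith
            linarith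
    have hgr := norm_le_gronwallBound_of_norm_deriv_right_le
      (hXc.mono hsub) hder (le_refl ‖X a‖) hbd s hs
    rw [gronwallBound_of_K_ne_0 (ne_of_gt hK)] at hgr
    have hdivK : K * (1 + L + K * ‖X a‖) / K = 1 + L + K * ‖X a‖ := by
      field_simp
    rw [hdivK] at hgr
    beta_reduce at hgr
    have hs1 : 0 ≤ s - a := sub_nonneg.2 hs.1
    have hs2 : s - a ≤ h := by
      have h1 := hs.2
      rw [ha'def] at h1
      have h2 : ((i:ℝ)+1)*h = (i:ℝ)*h + h := by ring
      rw [hadef]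
      linarith
    set e := Real.exp (K * (s - a)) with hedef
    have he1 : 1 ≤ e := Real.one_le_exp (mul_nonneg hK.le hs1)
    set E1 := Real.exp (K * h) with hE1def
    set E2 := Real.exp (K * K * h) with hE2def
    have heE1 : e ≤ E1 := Real.exp_le_exp.2 (mul_le_mul_of_nonneg_left hs2 hK.le)
    have hE11 : 1 ≤ E1 := Real.one_le_exp (by positivity)
    have hE21 : 1 + K*K*h ≤ E2 := by
      have := Real.add_one_le_exp (K*K*h); linarith
    have hE2ge : 1 ≤ E2 := Real.one_le_exp (by positivity)
    have hρeq : ρ = E1 * E2 := by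
      rw [hρdef, hE1def, hE2def, ← Real.exp_add]
      congr 1; ring
    have hE1sub : E1 - 1 ≤ K * h * E1 := by
      have h3 := Real.add_one_le_exp (-(K*h))
      have hE1pos : 0 < E1 := Real.exp_pos _
      have h4 : Real.exp (-(K*h)) * E1 = 1 := by
        rw [hE1def, ← Real.exp_add]; simp
      have h5 := mul_le_mul_of_nonneg_right h3 hE1pos.le
      rw [h4] at h5
      linarith only [h5]
    have hfinal : ‖X a‖ * e + (1 + L + K * ‖X a‖) * (e - 1)
        ≤ ρ * ‖X a‖ + ρ * (K * h * (1 + L)) := by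
      have c0 : (0:ℝ) ≤ 1 + L + K * ‖X a‖ := by positivity
      have s1 : ‖X a‖ * e ≤ ‖X a‖ * E1 := mul_le_mul_of_nonneg_left heE1 hXa0
      have s2 : (1 + L + K * ‖X a‖) * (e - 1) ≤ (1 + L + K * ‖X a‖) * (E1 - 1) :=
        mul_le_mul_of_nonneg_left (by linarith) c0
      have s3 : (1 + L + K * ‖X a‖) * (E1 - 1) ≤ (1 + L + K * ‖X a‖) * (K * h * E1) :=
        mul_le_mul_of_nonneg_left hE1sub c0
      have s4 : ‖X a‖ * E1 + (1 + L + K * ‖X a‖) * (K * h * E1)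
          = E1 * (‖X a‖ * (1 + K*K*h) + K * h * (1 + L)) := by ring
      have s5 : ‖X a‖ * (1 + K*K*h) ≤ ‖X a‖ * E2 :=
        mul_le_mul_of_nonneg_left hE21 hXa0
      have s6 : E1 * (‖X a‖ * (1 + K*K*h) + K * h * (1 + L))
          ≤ E1 * (‖X a‖ * E2 + K * h * (1 + L)) := by
        apply mul_le_mul_of_nonneg_left _ (by linarith)
        linarith
      have s7 : E1 * (‖X a‖ * E2 + K * h * (1 + L))
          ≤ E1 * E2 * ‖X a‖ + E1 * E2 * (K * h * (1 + L)) := by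
        have hkh : (0:ℝ) ≤ K * h * (1 + L) := by positivity
        have h1 : E1 ≤ E1 * E2 := le_mul_of_one_le_right (by linarith) hE2ge
        have h2 : E1 * (K * h * (1 + L)) ≤ E1 * E2 * (K * h * (1 + L)) :=
          mul_le_mul_of_nonneg_right h1 hkh
        have h3 : E1 * (‖X a‖ * E2 + K * h * (1 + L))
            = E1 * E2 * ‖X a‖ + E1 * (K * h * (1 + L)) := by ring
        linarith
      rw [hρeq]
      linarith
    linarith
  -- induction on endpoints
  have endpt : ∀ i : ℕ, i ≤ N → ‖X ((i:ℝ)*h)‖ + c ≤ ρ^i * (‖x₀‖ + c) := by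
    intro i
    induction i with
    | zero =>
      intro _
      simp [hX0]
    | succ j ihj =>
      intro hj
      have hjN : j < N := hj
      have hA := ihj (le_of_lt hjN)
      have hmemend : ((j:ℝ)+1)*h ∈ Set.Icc ((j:ℝ)*h) (((j:ℝ)+1)*h) := by
        constructor
        · have h1 : ((j:ℝ)+1)*h = (j:ℝ)*h + h := by ring
          linarith
        · exact le_rfl
      have hstep := step j hjN (((j:ℝ)+1)*h) hmemend
      have hcast : ((j+1:ℕ):ℝ) = (j:ℝ)+1 := by push_cast; ring
      rw [hcast]
      have h5 : ρ * (‖X ((j:ℝ)*h)‖ + c) ≤ ρ * (ρ^j * (‖x₀‖ + c)) :=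
        mul_le_mul_of_nonneg_left hA (by linarith)
      have h7 : ρ^(j+1) * (‖x₀‖ + c) = ρ * (ρ^j * (‖x₀‖ + c)) := by
        rw [pow_succ]; ring
      rw [h7]
      have h8 : ρ * (‖X ((j:ℝ)*h)‖ + c) = ρ * ‖X ((j:ℝ)*h)‖ + ρ * c := by ring
      have h9 : c * (ρ - 1) = c * ρ - c := by ring
      linarith [hstep, h5, h6]
  -- locate t in some subinterval
  rcases ht with ⟨ht0, htT⟩
  obtain ⟨i, hiN, hit1, hit2⟩ : ∃ i : ℕ, i < N ∧ (i:ℝ)*h ≤ t ∧ t ≤ ((i:ℝ)+1)*h := by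
    set j : ℕ := (⌊t / h⌋).toNat with hjdef
    have hfl0 : (0:ℤ) ≤ ⌊t / h⌋ := Int.floor_nonneg.2 (div_nonneg ht0 hh0.le)
    have hjcast : ((j:ℕ):ℝ) = ((⌊t / h⌋ : ℤ) : ℝ) := by
      rw [hjdef]
      exact_mod_cast congrArg (fun z : ℤ => (z : ℝ)) (Int.toNat_of_nonneg hfl0)
    refine ⟨min j (N-1), ?_, ?_, ?_⟩
    · exact lt_of_le_of_lt (min_le_right _ _) (Nat.sub_lt hN one_pos)
    · have h1 : ((min j (N-1) : ℕ) : ℝ) ≤ (j:ℝ) := by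
        exact_mod_cast Nat.cast_le.2 (min_le_left _ _)
      have h2 : ((⌊t / h⌋ : ℤ) : ℝ) ≤ t / h := Int.floor_le _
      have h2' : (j:ℝ) ≤ t / h := by rw [hjcast]; exact h2
      have h3 : ((min j (N-1) : ℕ) : ℝ) ≤ t / h := le_trans h1 h2'
      calc ((min j (N-1) : ℕ) : ℝ) * h ≤ (t / h) * h :=
            mul_le_mul_of_nonneg_right h3 hh0.le
        _ = t := by field_simp
    · by_cases hc2 : j ≤ N - 1
      · have hmin : min j (N-1) = j := min_eq_left hc2
        rw [hmin]
        have h2 : t / h < ((⌊t / h⌋ : ℤ) : ℝ) + 1 := Int.lt_floor_add_one _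
        have h3 : t / h < (j:ℝ) + 1 := by rw [hjcast]; exact h2
        have : t < ((j:ℝ) + 1) * h := by
          have := mul_lt_mul_of_pos_right h3 hh0
          rw [div_mul_cancel₀ t (ne_of_gt hh0)] at this
          exact this
        linarith
      · have hmin : min j (N-1) = N - 1 := min_eq_right (le_of_not_ge hc2)
        rw [hmin]
        have hNcast : (((N-1:ℕ)):ℝ) = (N:ℝ) - 1 := by
          have : (1:ℕ) ≤ N := hN
          push_cast [Nat.cast_sub this]
          ring
        rw [hNcast]
        have : ((N:ℝ) - 1 + 1) * h = T := by rw [sub_add_cancel]; exact hNh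
        rw [this]
        exact htT
  have hA := endpt i (le_of_lt hiN)
  have hstep := step i hiN t ⟨hit1, hit2⟩
  have h5 : ρ * (‖X ((i:ℝ)*h)‖ + c) ≤ ρ * (ρ^i * (‖x₀‖ + c)) :=
    mul_le_mul_of_nonneg_left hA (by linarith)
  have hpow : ρ^(i+1) ≤ P0 := by
    calc ρ^(i+1) ≤ ρ^N := pow_le_pow_right₀ (by linarith) hiN
      _ = P0 := hρN
  have hxc0 : (0:ℝ) ≤ ‖x₀‖ + c := by positivity
  have h8 : ρ^(i+1) * (‖x₀‖ + c) ≤ P0 * (‖x₀‖ + c) :=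
    mul_le_mul_of_nonneg_right hpow hxc0
  have h9 : ρ * (ρ^i * (‖x₀‖ + c)) = ρ^(i+1) * (‖x₀‖ + c) := by
    rw [pow_succ]; ring
  have h10 : ‖X t‖ ≤ P0 * (‖x₀‖ + c) := by
    linarith [hstep, h5, h6, h8, h9, hc0.le]
  have h11 : P0 * (‖x₀‖ + c) ≤ P0 * (1 + c) * (1 + ‖x₀‖) := by
    have hx0 : (0:ℝ) ≤ ‖x₀‖ := norm_nonneg _
    have hP0pos : (0:ℝ) < P0 := by rw [hP0def]; exact Real.exp_pos _
    have h1 : (0:ℝ) ≤ P0 * (c * ‖x₀‖) :=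
      mul_nonneg hP0pos.le (mul_nonneg hc0.le hx0)
    nlinarith [h1, hP0pos]
  calc ‖X t‖ ≤ P0 * (‖x₀‖ + c) := h10
    _ ≤ P0 * (1 + c) * (1 + ‖x₀‖) := h11
end
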